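/- Let (A₁,B₁,C₁,D₁) and (A₂,B₂,C₂,D₂) be minimal realizations of m×m transfer functions R and R_s, both negative imaginary. Assume I − D₂D₁ is invertible and that the closed-loop state matrix of the positive feedback interconnection, Ā = [[A₁ + B₁(I−D₂D₁)⁻¹D₂C₁, B₁(I−D₂D₁)⁻¹C₂], [B₂(I−D₁D₂)⁻¹C₁, A₂ + B₂(I−D₁D₂)⁻¹D₁C₂]], is Hurwitz. Then for every ω ∈ (0,∞) such that jω is an eigenvalue of neither A₁ nor A₂, the matrix I − R_s(jω)R(jω) is invertible and the 2m×2m closed-loop frequency response T(jω) = [[R(I−R_sR)⁻¹, R(I−R_sR)⁻¹R_s], [R_s(I−RR_s)⁻¹R, R_s(I−RR_s)⁻¹]] evaluated at jω satisfies j(T(jω) − T(jω)ᴴ) ⪰ 0. -/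

import Mathlib

open Matrix Filter Topology ComplexOrder

/-- The (complex) eigenvalues of a real square matrix. -/
noncomputable def eigs {k : Type*} [Fintype k] [DecidableEq k] (A : Matrix k k ℝ) : Set ℂ :=
  spectrum ℂ (A.map Complex.ofReal)

/-- A real square matrix is Hurwitz if all of its (complex) eigenvalues have negative real
part. -/
noncomputable def IsHurwitz {k : Type*} [Fintype k] [DecidableEq k] (A : Matrix k k ℝ) : Prop :=
  ∀ μ ∈ eigs A, μ.re < 0

/-- Transfer function `R(s) = C (sI - A)⁻¹ B + D` of a real state-space system, as a
complex matrix. -/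
noncomputable def tf {n m : ℕ} (A : Matrix (Fin n) (Fin n) ℝ) (B : Matrix (Fin n) (Fin m) ℝ)
    (C : Matrix (Fin m) (Fin n) ℝ) (D : Matrix (Fin m) (Fin m) ℝ) (s : ℂ) :
    Matrix (Fin m) (Fin m) ℂ :=
  C.map (Complex.ofReal) * (s • (1 : Matrix (Fin n) (Fin n) ℂ) - A.map Complex.ofReal)⁻¹ *
      B.map Complex.ofReal + D.map Complex.ofReal

/-- A state-space realization `(A,B,C,D)` is minimal if the controllability matrix and the
observability matrix both have rank `n`. -/
def IsMinimal {n m : ℕ} (A : Matrix (Fin n) (Fin n) ℝ) (B : Matrix (Fin n) (Fin m) ℝ)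
    (C : Matrix (Fin m) (Fin n) ℝ) : Prop :=
  (Matrix.of fun (i : Fin n) (p : Fin n × Fin m) => (A ^ (p.1 : ℕ) * B) i p.2).rank = n ∧
  (Matrix.of fun (p : Fin n × Fin m) (i : Fin n) => (C * A ^ (p.1 : ℕ)) p.2 i).rank = n

/-- The system `(A,B,C,D)` is negative imaginary (NI). -/
noncomputable def IsNI {n m : ℕ} (A : Matrix (Fin n) (Fin n) ℝ) (B : Matrix (Fin n) (Fin m) ℝ)
    (C : Matrix (Fin m) (Fin n) ℝ) (D : Matrix (Fin m) (Fin m) ℝ) : Prop :=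
  (∀ μ ∈ eigs A, μ ≠ 0 ∧ μ.re ≤ 0) ∧
  (∀ ω : ℝ, 0 < ω → (Complex.I * ω) ∉ eigs A →
    (Complex.I • (tf A B C D (Complex.I * ω) - (tf A B C D (Complex.I * ω))ᴴ)).PosSemidef) ∧
  (∀ ω : ℝ, 0 < ω → (Complex.I * ω) ∈ eigs A →
    ∃ K : Matrix (Fin m) (Fin m) ℂ,
      Tendsto (fun s : ℂ => (s - Complex.I * ω) • Complex.I • tf A B C D s)
        (𝓝[≠] (Complex.I * ω)) (𝓝 K) ∧ K.PosSemidef)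

/-- The system `(A,B,C,D)` is strictly negative imaginary (SNI). -/
noncomputable def IsSNI {n m : ℕ} (A : Matrix (Fin n) (Fin n) ℝ) (B : Matrix (Fin n) (Fin m) ℝ)
    (C : Matrix (Fin m) (Fin n) ℝ) (D : Matrix (Fin m) (Fin m) ℝ) : Prop :=
  IsHurwitz A ∧
  (∀ ω : ℝ, 0 < ω →
    (Complex.I • (tf A B C D (Complex.I * ω) - (tf A B C D (Complex.I * ω))ᴴ)).PosDef)

section Aux

lemma aux_isUnit_one_sub_mul_comm {A : Type*} [Ring A] {x y : A} (h : IsUnit (1 - x * y)) :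
    IsUnit (1 - y * x) := by
  refine ⟨⟨1 - y * x, 1 + y * h.unit.inv * x, ?_, ?_⟩, rfl⟩
  · calc
      (1 - y * x) * (1 + y * (IsUnit.unit h).inv * x) =
          1 - y * x + y * ((1 - x * y) * h.unit.inv) * x := by noncomm_ring
      _ = 1 := by simp only [Units.inv_eq_val_inv, IsUnit.mul_val_inv, mul_one, sub_add_cancel]
  · calc
      (1 + y * (IsUnit.unit h).inv * x) * (1 - y * x) =
          1 - y * x + y * (h.unit.inv * (1 - x * y)) * x := by noncomm_ring
      _ = 1 := by simp only [Units.inv_eq_val_inv, IsUnit.val_inv_mul, mul_one, sub_add_cancel]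

lemma aux_mulVec_eq_zero {k : Type*} [Fintype k] [DecidableEq k] {M : Matrix k k ℂ}
    (h : IsUnit M) {x : k → ℂ} (hx : M *ᵥ x = 0) : x = 0 := by
  obtain ⟨u, rfl⟩ := h
  have h2 : (↑u⁻¹ : Matrix k k ℂ) *ᵥ ((↑u : Matrix k k ℂ) *ᵥ x) = 0 := by
    rw [hx, Matrix.mulVec_zero]
  rw [Matrix.mulVec_mulVec, ← Units.val_mul] at h2
  simpa using h2

lemma aux_mapC_mul {a b c : Type*} [Fintype b] (M : Matrix a b ℝ) (N : Matrix b c ℝ) :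
    (M * N).map Complex.ofReal = M.map Complex.ofReal * N.map Complex.ofReal :=
  Matrix.map_mul (f := Complex.ofRealHom)

lemma aux_mapC_sub {a b : Type*} (M N : Matrix a b ℝ) :
    (M - N).map Complex.ofReal = M.map Complex.ofReal - N.map Complex.ofReal :=
  Matrix.map_sub _ (by simp) _ _

lemma aux_mapC_add {a b : Type*} (M N : Matrix a b ℝ) :
    (M + N).map Complex.ofReal = M.map Complex.ofReal + N.map Complex.ofReal :=
  Matrix.map_add _ (by simp) _ _

lemma aux_mapC_one {a : Type*} [Fintype a] [DecidableEq a] :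
    (1 : Matrix a a ℝ).map Complex.ofReal = 1 :=
  Matrix.map_one _ (by simp) (by simp)

lemma aux_mapC_isUnit {k : Type*} [Fintype k] [DecidableEq k] {M : Matrix k k ℝ}
    (h : IsUnit M) : IsUnit (M.map Complex.ofReal) := by
  exact h.map (Complex.ofRealHom.mapMatrix (m := k))

lemma aux_posSemidef_fromBlocks {a b : Type*} [Fintype a] [Fintype b]
    {A : Matrix a a ℂ} {D : Matrix b b ℂ} (hA : A.PosSemidef) (hD : D.PosSemidef) :
    (Matrix.fromBlocks A 0 0 D).PosSemidef := by
  refine Matrix.posSemidef_iff_dotProduct_mulVec.mpr ⟨?_, ?_⟩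
  · have : (Matrix.fromBlocks A 0 0 D)ᴴ = Matrix.fromBlocks Aᴴ 0 0 Dᴴ := by
      rw [Matrix.fromBlocks_conjTranspose]; simp
    rw [Matrix.IsHermitian, this, hA.1.eq, hD.1.eq]
  · intro x
    have hx : x = Sum.elim (x ∘ Sum.inl) (x ∘ Sum.inr) := by funext i; cases i <;> rfl
    rw [hx, Matrix.fromBlocks_mulVec]
    simp only [Function.star_sumElim, Matrix.zero_mulVec, add_zero, zero_add,
      sumElim_dotProduct_sumElim, Sum.elim_comp_inl, Sum.elim_comp_inr]
    exact add_nonneg (hA.dotProduct_mulVec_nonneg _) (hD.dotProduct_mulVec_nonneg _)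

lemma aux_feedback_isUnit {n₁ n₂ m : Type*} [Fintype n₁] [DecidableEq n₁]
    [Fintype n₂] [DecidableEq n₂] [Fintype m] [DecidableEq m]
    (s : ℂ) (hs : s.re = 0)
    (A₁ : Matrix n₁ n₁ ℂ) (B₁ : Matrix n₁ m ℂ) (C₁ : Matrix m n₁ ℂ) (D₁ : Matrix m m ℂ)
    (A₂ : Matrix n₂ n₂ ℂ) (B₂ : Matrix n₂ m ℂ) (C₂ : Matrix m n₂ ℂ) (D₂ : Matrix m m ℂ)
    (Ei Fi : Matrix m m ℂ)
    (hEi : Ei * (1 - D₂ * D₁) = 1) (hFi : Fi * (1 - D₁ * D₂) = 1)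
    (hP₁ : IsUnit (s • (1 : Matrix n₁ n₁ ℂ) - A₁))
    (hP₂ : IsUnit (s • (1 : Matrix n₂ n₂ ℂ) - A₂))
    (hA : ∀ μ ∈ spectrum ℂ (Matrix.fromBlocks
      (A₁ + B₁ * Ei * D₂ * C₁) (B₁ * Ei * C₂)
      (B₂ * Fi * C₁) (A₂ + B₂ * Fi * D₁ * C₂)), μ.re < 0) :
    IsUnit (1 - (C₂ * (s • 1 - A₂)⁻¹ * B₂ + D₂) * (C₁ * (s • 1 - A₁)⁻¹ * B₁ + D₁)) := by
  set R₁ : Matrix m m ℂ := C₁ * (s • 1 - A₁)⁻¹ * B₁ + D₁ with hR₁def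
  set R₂ : Matrix m m ℂ := C₂ * (s • 1 - A₂)⁻¹ * B₂ + D₂ with hR₂def
  by_contra hc
  rw [Matrix.isUnit_iff_isUnit_det, isUnit_iff_ne_zero, not_not] at hc
  obtain ⟨u, hu0, huv⟩ := Matrix.exists_mulVec_eq_zero_iff.mpr hc
  have hu : R₂ *ᵥ (R₁ *ᵥ u) = u := by
    have h' : u - (R₂ * R₁) *ᵥ u = 0 := by
      simpa [Matrix.sub_mulVec, Matrix.one_mulVec] using huv
    rw [Matrix.mulVec_mulVec]
    exact (sub_eq_zero.mp h').symm
  have hd₁ := (Matrix.isUnit_iff_isUnit_det _).mp hP₁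
  have hd₂ := (Matrix.isUnit_iff_isUnit_det _).mp hP₂
  set x₁ : n₁ → ℂ := (s • 1 - A₁)⁻¹ *ᵥ (B₁ *ᵥ u) with hx₁def
  set y₁ : m → ℂ := R₁ *ᵥ u with hy₁def
  set x₂ : n₂ → ℂ := (s • 1 - A₂)⁻¹ *ᵥ (B₂ *ᵥ y₁) with hx₂def
  have hx₁ : (s • 1 - A₁) *ᵥ x₁ = B₁ *ᵥ u := by
    rw [hx₁def, Matrix.mulVec_mulVec, Matrix.mul_nonsing_inv _ hd₁, Matrix.one_mulVec]
  have hx₂ : (s • 1 - A₂) *ᵥ x₂ = B₂ *ᵥ y₁ := by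
    rw [hx₂def, Matrix.mulVec_mulVec, Matrix.mul_nonsing_inv _ hd₂, Matrix.one_mulVec]
  have hy₁ : y₁ = C₁ *ᵥ x₁ + D₁ *ᵥ u := by
    rw [hy₁def, hR₁def, hx₁def]
    simp [Matrix.add_mulVec, Matrix.mulVec_mulVec, Matrix.mul_assoc]
  have hy₂ : C₂ *ᵥ x₂ + D₂ *ᵥ y₁ = u := by
    rw [hx₂def, ← hu, hR₂def, hy₁def]
    simp [Matrix.add_mulVec, Matrix.mulVec_mulVec, Matrix.mul_assoc, Matrix.add_mul]
  have e₁ : C₁ *ᵥ x₁ = y₁ - D₁ *ᵥ u := by rw [hy₁]; abel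
  have e₂ : C₂ *ᵥ x₂ = u - D₂ *ᵥ y₁ := by rw [← hy₂]; abel
  have k₁ : D₂ *ᵥ (C₁ *ᵥ x₁) + C₂ *ᵥ x₂ = (1 - D₂ * D₁) *ᵥ u := by
    rw [e₁, e₂, Matrix.mulVec_sub, Matrix.sub_mulVec, Matrix.one_mulVec,
      ← Matrix.mulVec_mulVec]
    abel
  have k₂ : C₁ *ᵥ x₁ + D₁ *ᵥ (C₂ *ᵥ x₂) = (1 - D₁ * D₂) *ᵥ y₁ := by
    rw [e₁, e₂, Matrix.mulVec_sub, Matrix.sub_mulVec, Matrix.one_mulVec,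
      ← Matrix.mulVec_mulVec]
    abel
  have kE : Ei *ᵥ ((1 - D₂ * D₁) *ᵥ u) = u := by
    rw [Matrix.mulVec_mulVec, hEi, Matrix.one_mulVec]
  have kF : Fi *ᵥ ((1 - D₁ * D₂) *ᵥ y₁) = y₁ := by
    rw [Matrix.mulVec_mulVec, hFi, Matrix.one_mulVec]
  have top : (A₁ + B₁ * Ei * D₂ * C₁) *ᵥ x₁ + (B₁ * Ei * C₂) *ᵥ x₂ = s • x₁ := by
    have h' : (A₁ + B₁ * Ei * D₂ * C₁) *ᵥ x₁ + (B₁ * Ei * C₂) *ᵥ x₂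
        = A₁ *ᵥ x₁ + B₁ *ᵥ (Ei *ᵥ (D₂ *ᵥ (C₁ *ᵥ x₁) + C₂ *ᵥ x₂)) := by
      simp only [Matrix.add_mulVec, Matrix.mulVec_add, ← Matrix.mulVec_mulVec]
      abel
    rw [h', k₁, kE, ← hx₁, Matrix.sub_mulVec, Matrix.smul_mulVec, Matrix.one_mulVec]
    abel
  have bot : (B₂ * Fi * C₁) *ᵥ x₁ + (A₂ + B₂ * Fi * D₁ * C₂) *ᵥ x₂ = s • x₂ := by
    have h' : (B₂ * Fi * C₁) *ᵥ x₁ + (A₂ + B₂ * Fi * D₁ * C₂) *ᵥ x₂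
        = A₂ *ᵥ x₂ + B₂ *ᵥ (Fi *ᵥ (C₁ *ᵥ x₁ + D₁ *ᵥ (C₂ *ᵥ x₂))) := by
      simp only [Matrix.add_mulVec, Matrix.mulVec_add, ← Matrix.mulVec_mulVec]
      abel
    rw [h', k₂, kF, ← hx₂, Matrix.sub_mulVec, Matrix.smul_mulVec, Matrix.one_mulVec]
    abel
  have hxne : Sum.elim x₁ x₂ ≠ 0 := by
    intro h0
    have hx10 : x₁ = 0 := funext fun i => congrFun h0 (Sum.inl i)
    have hx20 : x₂ = 0 := funext fun i => congrFun h0 (Sum.inr i)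
    have hz : (1 - D₂ * D₁) *ᵥ u = 0 := by
      rw [← k₁, hx10, hx20]
      simp
    have : u = 0 := by rw [← kE, hz, Matrix.mulVec_zero]
    exact hu0 this
  have hsmul : s • Sum.elim x₁ x₂ = Sum.elim (s • x₁) (s • x₂) := by
    funext i; cases i <;> rfl
  have hmem : s ∈ spectrum ℂ (Matrix.fromBlocks
      (A₁ + B₁ * Ei * D₂ * C₁) (B₁ * Ei * C₂)
      (B₂ * Fi * C₁) (A₂ + B₂ * Fi * D₁ * C₂)) := by
    rw [spectrum.mem_iff, Algebra.algebraMap_eq_smul_one]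
    intro hunit
    apply hxne
    apply aux_mulVec_eq_zero hunit
    rw [Matrix.sub_mulVec, Matrix.smul_mulVec, Matrix.one_mulVec,
      Matrix.fromBlocks_mulVec]
    simp only [Sum.elim_comp_inl, Sum.elim_comp_inr]
    rw [top, bot, ← hsmul, sub_self]
  have := hA s hmem
  rw [hs] at this
  exact lt_irrefl 0 this

lemma aux_closed_loop_psd {m : Type*} [Fintype m] [DecidableEq m]
    (R₁ R₂ : Matrix m m ℂ)
    (hM : IsUnit (1 - R₂ * R₁))
    (h₁ : (Complex.I • (R₁ - R₁ᴴ)).PosSemidef)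
    (h₂ : (Complex.I • (R₂ - R₂ᴴ)).PosSemidef) :
    (Complex.I •
      ((Matrix.fromBlocks (R₁ * (1 - R₂ * R₁)⁻¹) (R₁ * (1 - R₂ * R₁)⁻¹ * R₂)
        (R₂ * (1 - R₁ * R₂)⁻¹ * R₁) (R₂ * (1 - R₁ * R₂)⁻¹)) -
      (Matrix.fromBlocks (R₁ * (1 - R₂ * R₁)⁻¹) (R₁ * (1 - R₂ * R₁)⁻¹ * R₂)
        (R₂ * (1 - R₁ * R₂)⁻¹ * R₁) (R₂ * (1 - R₁ * R₂)⁻¹))ᴴ)).PosSemidef := by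
  set M : Matrix m m ℂ := 1 - R₂ * R₁ with hMdef
  set N : Matrix m m ℂ := 1 - R₁ * R₂ with hNdef
  have hN : IsUnit N := aux_isUnit_one_sub_mul_comm hM
  have hMd := (Matrix.isUnit_iff_isUnit_det _).mp hM
  have hNd := (Matrix.isUnit_iff_isUnit_det _).mp hN
  have hcomm₁ : R₁ * M = N * R₁ := by rw [hMdef, hNdef]; noncomm_ring
  have hcomm₂ : R₂ * N = M * R₂ := by rw [hMdef, hNdef]; noncomm_ring
  have swap₁ : N⁻¹ * R₁ = R₁ * M⁻¹ := by
    calc N⁻¹ * R₁ = N⁻¹ * (R₁ * M * M⁻¹) := by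
          rw [Matrix.mul_assoc R₁ M M⁻¹, Matrix.mul_nonsing_inv _ hMd, Matrix.mul_one]
      _ = N⁻¹ * (N * (R₁ * M⁻¹)) := by rw [hcomm₁, Matrix.mul_assoc]
      _ = R₁ * M⁻¹ := by rw [← Matrix.mul_assoc, Matrix.nonsing_inv_mul _ hNd, Matrix.one_mul]
  have swap₂ : M⁻¹ * R₂ = R₂ * N⁻¹ := by
    calc M⁻¹ * R₂ = M⁻¹ * (R₂ * N * N⁻¹) := by
          rw [Matrix.mul_assoc R₂ N N⁻¹, Matrix.mul_nonsing_inv _ hNd, Matrix.mul_one]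
      _ = M⁻¹ * (M * (R₂ * N⁻¹)) := by rw [hcomm₂, Matrix.mul_assoc]
      _ = R₂ * N⁻¹ := by rw [← Matrix.mul_assoc, Matrix.nonsing_inv_mul _ hMd, Matrix.one_mul]
  set W : Matrix (m ⊕ m) (m ⊕ m) ℂ := Matrix.fromBlocks M⁻¹ (M⁻¹ * R₂) (N⁻¹ * R₁) N⁻¹ with hW
  set G : Matrix (m ⊕ m) (m ⊕ m) ℂ := Matrix.fromBlocks R₁ 0 0 R₂ with hG
  set Fm : Matrix (m ⊕ m) (m ⊕ m) ℂ := Matrix.fromBlocks 0 R₂ R₁ 0 with hFm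
  have hGW : Matrix.fromBlocks (R₁ * M⁻¹) (R₁ * M⁻¹ * R₂)
      (R₂ * N⁻¹ * R₁) (R₂ * N⁻¹) = G * W := by
    rw [hG, hW, Matrix.fromBlocks_multiply]
    simp [Matrix.mul_assoc]
  have hOneSubF : (1 : Matrix (m ⊕ m) (m ⊕ m) ℂ) - Fm
      = Matrix.fromBlocks 1 (-R₂) (-R₁) 1 := by
    rw [hFm, ← Matrix.fromBlocks_one, sub_eq_add_neg, Matrix.fromBlocks_neg,
      Matrix.fromBlocks_add]
    simp
  have TL : (1 : Matrix m m ℂ) * M⁻¹ + (-R₂) * (N⁻¹ * R₁) = 1 := by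
    have h' : (-R₂) * (N⁻¹ * R₁) = -(M⁻¹ * (R₂ * R₁)) := by
      rw [neg_mul, ← Matrix.mul_assoc, ← swap₂, Matrix.mul_assoc]
    calc (1 : Matrix m m ℂ) * M⁻¹ + (-R₂) * (N⁻¹ * R₁)
        = M⁻¹ * 1 - M⁻¹ * (R₂ * R₁) := by
          rw [h', Matrix.one_mul, Matrix.mul_one, sub_eq_add_neg]
      _ = M⁻¹ * (1 - R₂ * R₁) := (Matrix.mul_sub _ _ _).symm
      _ = 1 := by rw [← hMdef, Matrix.nonsing_inv_mul _ hMd]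
  have TR : (1 : Matrix m m ℂ) * (M⁻¹ * R₂) + (-R₂) * N⁻¹ = 0 := by
    rw [Matrix.one_mul, swap₂, neg_mul]
    abel
  have BL : (-R₁) * M⁻¹ + (1 : Matrix m m ℂ) * (N⁻¹ * R₁) = 0 := by
    rw [Matrix.one_mul, swap₁, neg_mul]
    abel
  have BR : (-R₁) * (M⁻¹ * R₂) + (1 : Matrix m m ℂ) * N⁻¹ = 1 := by
    have h' : (-R₁) * (M⁻¹ * R₂) = -(N⁻¹ * (R₁ * R₂)) := by
      rw [neg_mul, ← Matrix.mul_assoc, ← swap₁, Matrix.mul_assoc]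
    calc (-R₁) * (M⁻¹ * R₂) + (1 : Matrix m m ℂ) * N⁻¹
        = N⁻¹ * 1 - N⁻¹ * (R₁ * R₂) := by
          rw [h', Matrix.one_mul, Matrix.mul_one]
          abel
      _ = N⁻¹ * (1 - R₁ * R₂) := (Matrix.mul_sub _ _ _).symm
      _ = 1 := by rw [← hNdef, Matrix.nonsing_inv_mul _ hNd]
  have hIFW : ((1 : Matrix (m ⊕ m) (m ⊕ m) ℂ) - Fm) * W = 1 := by
    rw [hOneSubF, hW, Matrix.fromBlocks_multiply, TL, TR, BL, BR, Matrix.fromBlocks_one]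
  have hWconj : Wᴴ * ((1 : Matrix (m ⊕ m) (m ⊕ m) ℂ) - Fm)ᴴ = 1 := by
    rw [← Matrix.conjTranspose_mul, hIFW, Matrix.conjTranspose_one]
  have hFG : Fmᴴ * G = Gᴴ * Fm := by
    rw [hFm, hG, Matrix.fromBlocks_conjTranspose, Matrix.fromBlocks_conjTranspose]
    simp [Matrix.fromBlocks_multiply]
  have hmid : ((1 : Matrix (m ⊕ m) (m ⊕ m) ℂ) - Fm)ᴴ * G
      - Gᴴ * ((1 : Matrix (m ⊕ m) (m ⊕ m) ℂ) - Fm) = G - Gᴴ := by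
    rw [Matrix.conjTranspose_sub, Matrix.conjTranspose_one, Matrix.sub_mul, Matrix.mul_sub,
      Matrix.one_mul, Matrix.mul_one, hFG]
    abel
  have hkey : G * W - Wᴴ * Gᴴ = Wᴴ * (G - Gᴴ) * W := by
    calc G * W - Wᴴ * Gᴴ
        = (Wᴴ * ((1 : Matrix (m ⊕ m) (m ⊕ m) ℂ) - Fm)ᴴ) * (G * W)
          - (Wᴴ * Gᴴ) * (((1 : Matrix (m ⊕ m) (m ⊕ m) ℂ) - Fm) * W) := by
            rw [hWconj, hIFW, Matrix.one_mul, Matrix.mul_one]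
      _ = Wᴴ * ((((1 : Matrix (m ⊕ m) (m ⊕ m) ℂ) - Fm)ᴴ * G
          - Gᴴ * ((1 : Matrix (m ⊕ m) (m ⊕ m) ℂ) - Fm)) * W) := by noncomm_ring
      _ = Wᴴ * (G - Gᴴ) * W := by rw [hmid, Matrix.mul_assoc]
  have hGblk : Complex.I • (G - Gᴴ) = Matrix.fromBlocks
      (Complex.I • (R₁ - R₁ᴴ)) 0 0 (Complex.I • (R₂ - R₂ᴴ)) := by
    rw [hG, Matrix.fromBlocks_conjTranspose]
    ext i j
    cases i <;> cases j <;> simp [Matrix.fromBlocks]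
  have hfinal : Complex.I •
      ((Matrix.fromBlocks (R₁ * M⁻¹) (R₁ * M⁻¹ * R₂) (R₂ * N⁻¹ * R₁) (R₂ * N⁻¹)) -
       (Matrix.fromBlocks (R₁ * M⁻¹) (R₁ * M⁻¹ * R₂) (R₂ * N⁻¹ * R₁) (R₂ * N⁻¹))ᴴ)
      = Wᴴ * (Complex.I • (G - Gᴴ)) * W := by
    rw [hGW, Matrix.conjTranspose_mul, hkey, mul_smul_comm, smul_mul_assoc]
  rw [hfinal, hGblk]
  exact (aux_posSemidef_fromBlocks h₁ h₂).conjTranspose_mul_mul_same W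

end Aux

/-- Lemma: the closed-loop transfer function of an internally stable positive feedback
interconnection of two NI systems is NI. -/
theorem closed_loop_of_ni_interconnection_is_ni {n₁ n₂ m : ℕ}
    (A₁ : Matrix (Fin n₁) (Fin n₁) ℝ) (B₁ : Matrix (Fin n₁) (Fin m) ℝ)
    (C₁ : Matrix (Fin m) (Fin n₁) ℝ) (D₁ : Matrix (Fin m) (Fin m) ℝ)
    (A₂ : Matrix (Fin n₂) (Fin n₂) ℝ) (B₂ : Matrix (Fin n₂) (Fin m) ℝ)
    (C₂ : Matrix (Fin m) (Fin n₂) ℝ) (D₂ : Matrix (Fin m) (Fin m) ℝ)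
    (hmin₁ : IsMinimal A₁ B₁ C₁) (hmin₂ : IsMinimal A₂ B₂ C₂)
    (hNI₁ : IsNI A₁ B₁ C₁ D₁) (hNI₂ : IsNI A₂ B₂ C₂ D₂)
    (hD : IsUnit (1 - D₂ * D₁))
    (hA : IsHurwitz (Matrix.fromBlocks
      (A₁ + B₁ * (1 - D₂ * D₁)⁻¹ * D₂ * C₁) (B₁ * (1 - D₂ * D₁)⁻¹ * C₂)
      (B₂ * (1 - D₁ * D₂)⁻¹ * C₁) (A₂ + B₂ * (1 - D₁ * D₂)⁻¹ * D₁ * C₂))) :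
    ∀ ω : ℝ, 0 < ω → (Complex.I * ω) ∉ eigs A₁ → (Complex.I * ω) ∉ eigs A₂ →
      IsUnit (1 - tf A₂ B₂ C₂ D₂ (Complex.I * ω) * tf A₁ B₁ C₁ D₁ (Complex.I * ω)) ∧
      (Complex.I •
        ((Matrix.fromBlocks
            (tf A₁ B₁ C₁ D₁ (Complex.I * ω) *
              (1 - tf A₂ B₂ C₂ D₂ (Complex.I * ω) * tf A₁ B₁ C₁ D₁ (Complex.I * ω))⁻¹)
            (tf A₁ B₁ C₁ D₁ (Complex.I * ω) *
              (1 - tf A₂ B₂ C₂ D₂ (Complex.I * ω) * tf A₁ B₁ C₁ D₁ (Complex.I * ω))⁻¹ *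
              tf A₂ B₂ C₂ D₂ (Complex.I * ω))
            (tf A₂ B₂ C₂ D₂ (Complex.I * ω) *
              (1 - tf A₁ B₁ C₁ D₁ (Complex.I * ω) * tf A₂ B₂ C₂ D₂ (Complex.I * ω))⁻¹ *
              tf A₁ B₁ C₁ D₁ (Complex.I * ω))
            (tf A₂ B₂ C₂ D₂ (Complex.I * ω) *
              (1 - tf A₁ B₁ C₁ D₁ (Complex.I * ω) * tf A₂ B₂ C₂ D₂ (Complex.I * ω))⁻¹)) -
          (Matrix.fromBlocks
            (tf A₁ B₁ C₁ D₁ (Complex.I * ω) *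
              (1 - tf A₂ B₂ C₂ D₂ (Complex.I * ω) * tf A₁ B₁ C₁ D₁ (Complex.I * ω))⁻¹)
            (tf A₁ B₁ C₁ D₁ (Complex.I * ω) *
              (1 - tf A₂ B₂ C₂ D₂ (Complex.I * ω) * tf A₁ B₁ C₁ D₁ (Complex.I * ω))⁻¹ *
              tf A₂ B₂ C₂ D₂ (Complex.I * ω))
            (tf A₂ B₂ C₂ D₂ (Complex.I * ω) *
              (1 - tf A₁ B₁ C₁ D₁ (Complex.I * ω) * tf A₂ B₂ C₂ D₂ (Complex.I * ω))⁻¹ *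
              tf A₁ B₁ C₁ D₁ (Complex.I * ω))
            (tf A₂ B₂ C₂ D₂ (Complex.I * ω) *
              (1 - tf A₁ B₁ C₁ D₁ (Complex.I * ω) * tf A₂ B₂ C₂ D₂ (Complex.I * ω))⁻¹))ᴴ)).PosSemidef := by
  intro ω hω h1 h2
  have hsre : (Complex.I * (ω : ℂ)).re = 0 := by simp
  have hEd : IsUnit (1 - D₂ * D₁).det := (Matrix.isUnit_iff_isUnit_det _).mp hD
  have hF : IsUnit (1 - D₁ * D₂) := aux_isUnit_one_sub_mul_comm hD
  have hFd : IsUnit (1 - D₁ * D₂).det := (Matrix.isUnit_iff_isUnit_det _).mp hF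
  have hEi : ((1 - D₂ * D₁)⁻¹).map Complex.ofReal *
      (1 - D₂.map Complex.ofReal * D₁.map Complex.ofReal) = 1 := by
    have h0 : ((1 - D₂ * D₁)⁻¹ * (1 - D₂ * D₁)).map Complex.ofReal
        = (1 : Matrix (Fin m) (Fin m) ℝ).map Complex.ofReal := by
      rw [Matrix.nonsing_inv_mul _ hEd]
    rwa [aux_mapC_mul, aux_mapC_sub, aux_mapC_mul, aux_mapC_one] at h0
  have hFi : ((1 - D₁ * D₂)⁻¹).map Complex.ofReal *
      (1 - D₁.map Complex.ofReal * D₂.map Complex.ofReal) = 1 := by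
    have h0 : ((1 - D₁ * D₂)⁻¹ * (1 - D₁ * D₂)).map Complex.ofReal
        = (1 : Matrix (Fin m) (Fin m) ℝ).map Complex.ofReal := by
      rw [Matrix.nonsing_inv_mul _ hFd]
    rwa [aux_mapC_mul, aux_mapC_sub, aux_mapC_mul, aux_mapC_one] at h0
  have hP₁ : IsUnit ((Complex.I * (ω : ℂ)) • (1 : Matrix (Fin n₁) (Fin n₁) ℂ)
      - A₁.map Complex.ofReal) := by
    have := spectrum.notMem_iff.mp h1
    rwa [Algebra.algebraMap_eq_smul_one] at this
  have hP₂ : IsUnit ((Complex.I * (ω : ℂ)) • (1 : Matrix (Fin n₂) (Fin n₂) ℂ)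
      - A₂.map Complex.ofReal) := by
    have := spectrum.notMem_iff.mp h2
    rwa [Algebra.algebraMap_eq_smul_one] at this
  have hAc : ∀ μ ∈ spectrum ℂ (Matrix.fromBlocks
      (A₁.map Complex.ofReal + B₁.map Complex.ofReal * ((1 - D₂ * D₁)⁻¹).map Complex.ofReal *
        D₂.map Complex.ofReal * C₁.map Complex.ofReal)
      (B₁.map Complex.ofReal * ((1 - D₂ * D₁)⁻¹).map Complex.ofReal * C₂.map Complex.ofReal)
      (B₂.map Complex.ofReal * ((1 - D₁ * D₂)⁻¹).map Complex.ofReal * C₁.map Complex.ofReal)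
      (A₂.map Complex.ofReal + B₂.map Complex.ofReal * ((1 - D₁ * D₂)⁻¹).map Complex.ofReal *
        D₁.map Complex.ofReal * C₂.map Complex.ofReal)), μ.re < 0 := by
    intro μ hμ
    apply hA
    show μ ∈ spectrum ℂ _
    have hmap : (Matrix.fromBlocks
        (A₁ + B₁ * (1 - D₂ * D₁)⁻¹ * D₂ * C₁) (B₁ * (1 - D₂ * D₁)⁻¹ * C₂)
        (B₂ * (1 - D₁ * D₂)⁻¹ * C₁) (A₂ + B₂ * (1 - D₁ * D₂)⁻¹ * D₁ * C₂)).map Complex.ofReal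
        = Matrix.fromBlocks
      (A₁.map Complex.ofReal + B₁.map Complex.ofReal * ((1 - D₂ * D₁)⁻¹).map Complex.ofReal *
        D₂.map Complex.ofReal * C₁.map Complex.ofReal)
      (B₁.map Complex.ofReal * ((1 - D₂ * D₁)⁻¹).map Complex.ofReal * C₂.map Complex.ofReal)
      (B₂.map Complex.ofReal * ((1 - D₁ * D₂)⁻¹).map Complex.ofReal * C₁.map Complex.ofReal)
      (A₂.map Complex.ofReal + B₂.map Complex.ofReal * ((1 - D₁ * D₂)⁻¹).map Complex.ofReal *
        D₁.map Complex.ofReal * C₂.map Complex.ofReal) := by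
      rw [Matrix.fromBlocks_map]
      simp only [aux_mapC_add, aux_mapC_mul]
    rw [hmap]
    exact hμ
  have hM : IsUnit (1 - tf A₂ B₂ C₂ D₂ (Complex.I * ω) * tf A₁ B₁ C₁ D₁ (Complex.I * ω)) :=
    aux_feedback_isUnit (Complex.I * (ω : ℂ)) hsre
      (A₁.map Complex.ofReal) (B₁.map Complex.ofReal) (C₁.map Complex.ofReal)
      (D₁.map Complex.ofReal)
      (A₂.map Complex.ofReal) (B₂.map Complex.ofReal) (C₂.map Complex.ofReal)
      (D₂.map Complex.ofReal)
      (((1 - D₂ * D₁)⁻¹).map Complex.ofReal) (((1 - D₁ * D₂)⁻¹).map Complex.ofReal)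
      hEi hFi hP₁ hP₂ hAc
  exact ⟨hM, aux_closed_loop_psd _ _ hM (hNI₁.2.1 ω hω h1) (hNI₂.2.1 ω hω h2)⟩
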